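/- Let G be a finite group and p an odd prime dividing |G|. Then the exponent of p in ρ(G) = ∏_{x∈G} o(x) is even. Moreover, if 2 divides |G|, then the exponent of 2 in ρ(G) is odd. -/
import Mathlib

noncomputable def rho (G : Type*) [Group G] : ℕ := ∏ᶠ x : G, orderOf x

noncomputable def OmegaRho (G : Type*) [Group G] : ℕ :=
  ArithmeticFunction.cardFactors (rho G)

open Finset in
theorem parity_factorization_rho (G : Type*) [Group G] [Finite G] :
    (∀ p : ℕ, p.Prime → Odd p → p ∣ Nat.card G → Even ((rho G).factorization p)) ∧
    (2 ∣ Nat.card G → Odd ((rho G).factorization 2)) := by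
  classical
  cases nonempty_fintype G
  have hfac : ∀ p : ℕ, (rho G).factorization p = ∑ x : G, (orderOf x).factorization p := by
    intro p
    have h1 : rho G = ∏ x : G, orderOf x := finprod_eq_prod_of_fintype _
    rw [h1, Nat.factorization_prod (fun x _ => (orderOf_pos x).ne')]
    exact Finset.sum_apply' p
  set S : Finset G := univ.filter (fun x => x⁻¹ = x) with hS
  set T : Finset G := univ.filter (fun x => ¬ x⁻¹ = x) with hT
  -- sum over T of any inv-invariant ZMod 2 valued function vanishes
  have hTsum : ∀ h : G → ZMod 2, (∀ x, h x⁻¹ = h x) → ∑ x ∈ T, h x = 0 := by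
    intro h hh
    refine Finset.sum_involution (fun a _ => a⁻¹) ?_ ?_ ?_ ?_
    · intro a _; rw [hh]; exact CharTwo.add_self_eq_zero _
    · intro a ha _; exact (mem_filter.mp ha).2
    · intro a ha
      have ha' : ¬ a⁻¹ = a := (mem_filter.mp ha).2
      refine mem_filter.mpr ⟨mem_univ _, ?_⟩
      rw [inv_inv]
      exact fun h' => ha' h'.symm
    · intro a _; simp
  have hTcard : ((T.card : ℕ) : ZMod 2) = 0 := by
    have := hTsum (fun _ => 1) (fun _ => rfl)
    simpa using this
  -- elements of S have order dividing 2
  have hSord : ∀ x ∈ S, orderOf x = 1 ∨ orderOf x = 2 := by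
    intro x hx
    have hx' : x⁻¹ = x := (mem_filter.mp hx).2
    have : x ^ 2 = 1 := by
      rw [pow_two]
      exact mul_eq_one_iff_inv_eq.mpr hx'
    have hdvd : orderOf x ∣ 2 := orderOf_dvd_of_pow_eq_one this
    exact (Nat.prime_two.eq_one_or_self_of_dvd _ hdvd)
  have hsplit : ∀ p : ℕ,
      (((rho G).factorization p : ℕ) : ZMod 2) =
        (∑ x ∈ S, ((orderOf x).factorization p : ZMod 2)) +
        (∑ x ∈ T, ((orderOf x).factorization p : ZMod 2)) := by
    intro p
    rw [hfac p, Nat.cast_sum]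
    exact (Finset.sum_filter_add_sum_filter_not univ _ _).symm
  have hTzero : ∀ p : ℕ, (∑ x ∈ T, ((orderOf x).factorization p : ZMod 2)) = 0 := by
    intro p
    exact hTsum _ (fun x => by rw [orderOf_inv])
  constructor
  · intro p hp hodd _
    have hp2 : p ≠ 2 := by rintro rfl; exact ((by decide : ¬ Odd 2)) hodd
    have hSzero : ∑ x ∈ S, ((orderOf x).factorization p : ZMod 2) = 0 := by
      refine Finset.sum_eq_zero fun x hx => ?_
      rcases hSord x hx with h | h <;> rw [h]
      · simp
      · rw [Nat.Prime.factorization Nat.prime_two]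
        simp [Finsupp.single_apply, Ne.symm hp2]
    have : (((rho G).factorization p : ℕ) : ZMod 2) = 0 := by
      rw [hsplit p, hSzero, hTzero p, add_zero]
    obtain ⟨k, hk⟩ := (ZMod.natCast_eq_zero_iff _ 2).mp this
    exact ⟨k, by omega⟩
  · intro hG
    have hone : (1 : G) ∈ S := by simp [hS]
    have hScard : ((S.card : ℕ) : ZMod 2) = 0 := by
      have hcard : S.card + T.card = Fintype.card G :=
        Finset.card_filter_add_card_filter_not _
      have hGcard : ((Fintype.card G : ℕ) : ZMod 2) = 0 := by
        rw [ZMod.natCast_eq_zero_iff]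
        rwa [Nat.card_eq_fintype_card] at hG
      have := congrArg (fun n : ℕ => ((n : ℕ) : ZMod 2)) hcard
      simp only [Nat.cast_add, hTcard, add_zero] at this
      rw [this, hGcard]
    have hSsum : ∑ x ∈ S, ((orderOf x).factorization 2 : ZMod 2) = ((S.card : ℕ) : ZMod 2) + 1 := by
      rw [← Finset.add_sum_erase _ _ hone]
      have h1 : ((orderOf (1 : G)).factorization 2 : ZMod 2) = 0 := by simp
      rw [h1, zero_add]
      have hrest : ∀ x ∈ S.erase 1, ((orderOf x).factorization 2 : ZMod 2) = 1 := by
        intro x hx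
        have hxS := Finset.mem_of_mem_erase hx
        have hx1 : x ≠ 1 := Finset.ne_of_mem_erase hx
        rcases hSord x hxS with h | h
        · exact absurd (orderOf_eq_one_iff.mp h) hx1
        · rw [h, Nat.Prime.factorization Nat.prime_two]; simp
      rw [Finset.sum_congr rfl hrest, Finset.sum_const, nsmul_eq_mul, mul_one]
      rw [Finset.card_erase_of_mem hone]
      have hpos : 1 ≤ S.card := Finset.card_pos.mpr ⟨1, hone⟩
      have : ((S.card - 1 : ℕ) : ZMod 2) = (S.card : ZMod 2) - 1 := by
        rw [Nat.cast_sub hpos, Nat.cast_one]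
      rw [this]
      ring_nf
      rw [CharTwo.neg_eq]
    have hval : (((rho G).factorization 2 : ℕ) : ZMod 2) = 1 := by
      rw [hsplit 2, hSsum, hTzero 2, add_zero, hScard, zero_add]
    rw [Nat.odd_iff]
    rcases Nat.mod_two_eq_zero_or_one ((rho G).factorization 2) with h | h
    · exfalso
      have : (((rho G).factorization 2 : ℕ) : ZMod 2) = 0 := by
        rw [ZMod.natCast_eq_zero_iff]
        exact Nat.dvd_of_mod_eq_zero h
      rw [hval] at this
      exact one_ne_zero this
    · exact h
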